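/- Let A and B be n×n positive semidefinite complex matrices. Then tr(A+B) − tr((A^2 + B^2)^{1/2}) ≤ (tr(A+B) − ‖A − B‖_1)/2. -/

import Mathlib

open scoped ComplexOrder

/-- The matrix square root of a positive semidefinite matrix, as `Matrix.PosSemidef.sqrt` was
defined in Mathlib (Dec 2024); it was removed from Mathlib since. -/
noncomputable def Matrix.PosSemidef.sqrt {n 𝕜 : Type*} [Fintype n] [RCLike 𝕜] [DecidableEq n]
    {A : Matrix n n 𝕜} (hA : A.PosSemidef) : Matrix n n 𝕜 :=
  hA.1.eigenvectorUnitary.1 * Matrix.diagonal ((↑) ∘ Real.sqrt ∘ hA.1.eigenvalues) *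
    (star hA.1.eigenvectorUnitary : Matrix n n 𝕜)

/-- The trace norm `‖Z‖₁ = tr ((Zᴴ Z)^{1/2})` of a square complex matrix, i.e. the sum of its
singular values. -/
noncomputable def traceNorm {n : ℕ} (Z : Matrix (Fin n) (Fin n) ℂ) : ℝ :=
  ((Matrix.posSemidef_conjTranspose_mul_self Z).sqrt).trace.re

open scoped MatrixOrder in
lemma Matrix.PosSemidef.sqrt_eq_cfc {n : ℕ} {A : Matrix (Fin n) (Fin n) ℂ} (hA : A.PosSemidef) :
    hA.sqrt = CFC.sqrt A := by
  rw [CFC.sqrt_eq_real_sqrt A hA.nonneg,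
    cfcₙ_eq_cfc (hf := Real.continuous_sqrt.continuousOn) (hf0 := Real.sqrt_zero),
    hA.1.cfc_eq, Matrix.IsHermitian.cfc, Unitary.conjStarAlgAut_apply]
  rfl

open scoped MatrixOrder in
lemma Matrix.PosSemidef.sqrt_mul_self {n : ℕ} {A : Matrix (Fin n) (Fin n) ℂ}
    (hA : A.PosSemidef) : hA.sqrt * hA.sqrt = A := by
  rw [hA.sqrt_eq_cfc]; exact CFC.sqrt_mul_sqrt_self A hA.nonneg

open scoped MatrixOrder in
lemma Matrix.PosSemidef.sq_sqrt {n : ℕ} {A : Matrix (Fin n) (Fin n) ℂ}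
    (hA : A.PosSemidef) : hA.sqrt ^ 2 = A := by
  rw [hA.sqrt_eq_cfc]; exact CFC.sq_sqrt A hA.nonneg

open scoped MatrixOrder in
lemma Matrix.PosSemidef.posSemidef_sqrt {n : ℕ} {A : Matrix (Fin n) (Fin n) ℂ}
    (hA : A.PosSemidef) : hA.sqrt.PosSemidef := by
  rw [hA.sqrt_eq_cfc]; exact Matrix.nonneg_iff_posSemidef.mp (CFC.sqrt_nonneg A)

open scoped MatrixOrder in
lemma Matrix.PosSemidef.eq_sqrt_of_sq_eq {n : ℕ} {A B : Matrix (Fin n) (Fin n) ℂ}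
    (hA : A.PosSemidef) (hB : B.PosSemidef) (h : A ^ 2 = B) : A = hB.sqrt := by
  rw [hB.sqrt_eq_cfc, eq_comm, CFC.sqrt_eq_iff B A hB.nonneg hA.nonneg, ← pow_two, h]

open Matrix in
/-- The trace of a positive semidefinite matrix is nonnegative. -/
lemma psd_trace_nonneg {n : ℕ} {M : Matrix (Fin n) (Fin n) ℂ} (hM : M.PosSemidef) :
    0 ≤ M.trace := by
  rw [Matrix.trace]
  apply Finset.sum_nonneg
  intro i _
  have h := hM.dotProduct_mulVec_nonneg (Pi.single i 1)
  have hs : star (Pi.single i 1 : Fin n → ℂ) = Pi.single i 1 := by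
    funext j
    by_cases hij : j = i <;> simp [hij, Pi.single_apply]
  rw [hs, single_dotProduct, one_mul, Matrix.mulVec_single] at h
  simpa [Matrix.diag] using h

open Matrix in
/-- The trace of the product of two positive semidefinite matrices is nonnegative. -/
lemma psd_trace_mul_nonneg {n : ℕ} {P Q : Matrix (Fin n) (Fin n) ℂ}
    (hP : P.PosSemidef) (hQ : Q.PosSemidef) : 0 ≤ (P * Q).trace := by
  have h1 : P * Q = hP.sqrt * (hP.sqrt * Q) := by
    rw [← mul_assoc, hP.sqrt_mul_self]
  rw [h1, Matrix.trace_mul_comm]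
  have h2 : hP.sqrt * Q * hP.sqrt = (hP.sqrt)ᴴ * Q * hP.sqrt := by
    rw [hP.posSemidef_sqrt.1]
  have h3 : (hP.sqrt * Q * hP.sqrt).PosSemidef := by
    rw [h2]; exact hQ.conjTranspose_mul_mul_same _
  simpa [mul_assoc] using psd_trace_nonneg h3

open Matrix in
/-- Operator monotonicity of the square root: if `N² - A²` is PSD then so is `N - A`. -/
lemma psd_sub_of_sq_sub_psd {n : ℕ} {A N : Matrix (Fin n) (Fin n) ℂ}
    (hA : A.PosSemidef) (hN : N.PosSemidef) (h : (N ^ 2 - A ^ 2).PosSemidef) :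
    (N - A).PosSemidef := by
  have hH : (N - A).IsHermitian := hN.1.sub hA.1
  apply hH.posSemidef_iff_eigenvalues_nonneg.mpr
  intro i
  show (0:ℝ) ≤ hH.eigenvalues i
  by_contra hlt
  push_neg at hlt
  set μ : ℝ := hH.eigenvalues i with hμ
  set v : Fin n → ℂ := ⇑(hH.eigenvectorBasis i) with hv
  have hev : (N - A) *ᵥ v = (μ : ℂ) • v := by
    rw [hv, hH.mulVec_eigenvectorBasis]
    funext j
    simp [Complex.real_smul, hμ]
  set cN : ℂ := star v ⬝ᵥ (N *ᵥ v) with hcN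
  set cA : ℂ := star v ⬝ᵥ (A *ᵥ v) with hcA
  have hcNpos : 0 ≤ cN := hN.dotProduct_mulVec_nonneg v
  have hcApos : 0 ≤ cA := hA.dotProduct_mulVec_nonneg v
  -- key algebraic identity
  have hid : N ^ 2 - A ^ 2 = N * (N - A) + (N - A) * A := by noncomm_ring
  have h2 : star v ⬝ᵥ ((N * (N - A)) *ᵥ v) = (μ : ℂ) * cN := by
    rw [← Matrix.mulVec_mulVec, hev, Matrix.mulVec_smul, dotProduct_smul,
      smul_eq_mul, hcN]
  have h3 : star v ⬝ᵥ (((N - A) * A) *ᵥ v) = (μ : ℂ) * cA := by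
    rw [← Matrix.mulVec_mulVec, Matrix.dotProduct_mulVec]
    have hvm : star v ᵥ* (N - A) = (μ : ℂ) • star v := by
      have := Matrix.star_mulVec (M := N - A) (v := v)
      rw [hH] at this
      rw [← this, hev]
      funext j
      simp [mul_comm]
    rw [hvm, smul_dotProduct, smul_eq_mul, hcA, Matrix.dotProduct_mulVec]
  have hkey : 0 ≤ (μ : ℂ) * (cN + cA) := by
    have := h.dotProduct_mulVec_nonneg v
    rwa [hid, Matrix.add_mulVec, dotProduct_add, h2, h3, ← mul_add] at this
  -- extract real parts
  have hcNre : 0 ≤ cN.re ∧ cN.im = 0 := by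
    have := (Complex.le_def).mp hcNpos
    exact ⟨by simpa using this.1, by simpa using this.2.symm⟩
  have hcAre : 0 ≤ cA.re ∧ cA.im = 0 := by
    have := (Complex.le_def).mp hcApos
    exact ⟨by simpa using this.1, by simpa using this.2.symm⟩
  have hkre : 0 ≤ μ * (cN.re + cA.re) := by
    have := (Complex.le_def).mp hkey
    simpa [Complex.mul_re, hcNre.2, hcAre.2] using this.1
  have hsum0 : cN.re + cA.re = 0 := by
    nlinarith [hcNre.1, hcAre.1]
  have hcN0 : cN = 0 := by
    apply Complex.ext <;> simp [hcNre.2]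
    linarith [hcNre.1, hcAre.1]
  have hcA0 : cA = 0 := by
    apply Complex.ext <;> simp [hcAre.2]
    linarith [hcNre.1, hcAre.1]
  have hNv : N *ᵥ v = 0 := (hN.dotProduct_mulVec_zero_iff v).mp hcN0
  have hAv : A *ᵥ v = 0 := (hA.dotProduct_mulVec_zero_iff v).mp hcA0
  have hHv : (N - A) *ᵥ v = 0 := by rw [Matrix.sub_mulVec, hNv, hAv, sub_zero]
  have : μ = 0 := by
    have heq := hH.eigenvalues_eq i
    rw [← hv, ← hμ, hHv] at heq
    simpa using heq
  linarith

/-- For positive semidefinite `A`, `B`: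
`tr (A+B) − tr ((A² + B²)^{1/2}) ≤ (tr (A+B) − ‖A − B‖₁) / 2`. -/
theorem trace_sub_trace_sqrt_le
    {n : ℕ} (A B : Matrix (Fin n) (Fin n) ℂ)
    (hA : A.PosSemidef) (hB : B.PosSemidef) :
    (A + B).trace.re - (((hA.pow 2).add (hB.pow 2)).sqrt).trace.re ≤
      ((A + B).trace.re - traceNorm (A - B)) / 2 := by
  classical
  set D : Matrix (Fin n) (Fin n) ℂ := A - B with hDdef
  have hD : D.IsHermitian := hA.1.sub hB.1
  set V : Matrix (Fin n) (Fin n) ℂ := (hD.eigenvectorUnitary : Matrix (Fin n) (Fin n) ℂ) with hVdef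
  have hV1 : V * star V = 1 := Matrix.mem_unitaryGroup_iff.mp hD.eigenvectorUnitary.2
  have hV2 : star V * V = 1 := Matrix.mem_unitaryGroup_iff'.mp hD.eigenvectorUnitary.2
  set l : Fin n → ℝ := hD.eigenvalues with hldef
  set s : Fin n → ℂ := fun i => if 0 ≤ l i then 1 else -1 with hsdef
  set U : Matrix (Fin n) (Fin n) ℂ := V * Matrix.diagonal s * star V with hUdef
  have hspec : D = V * Matrix.diagonal (RCLike.ofReal ∘ l) * star V := hD.spectral_theorem
  -- conjugation product formula
  have hconj : ∀ d e : Fin n → ℂ,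
      (V * Matrix.diagonal d * star V) * (V * Matrix.diagonal e * star V)
        = V * Matrix.diagonal (d * e) * star V := by
    intro d e
    simp only [mul_assoc]
    rw [← mul_assoc (star V) V, hV2, one_mul, ← mul_assoc (Matrix.diagonal d),
      Matrix.diagonal_mul_diagonal]
    rfl
  have habs : s * (RCLike.ofReal ∘ l) = RCLike.ofReal ∘ (fun i => |l i|) := by
    funext i
    by_cases hi : 0 ≤ l i
    · simp only [Pi.mul_apply, Function.comp_apply, hsdef, if_pos hi, one_mul,
        abs_of_nonneg hi]
    · push_neg at hi
      simp only [Pi.mul_apply, Function.comp_apply, hsdef, if_neg (not_le.mpr hi),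
        abs_of_neg hi, RCLike.ofReal_neg, neg_one_mul]
  have hUD : U * D = V * Matrix.diagonal (RCLike.ofReal ∘ (fun i => |l i|)) * star V := by
    conv_lhs => rw [hUdef, hspec]
    rw [hconj, habs]
  -- U * D is the absolute value of D
  have hUDpsd : (U * D).PosSemidef := by
    rw [hUD, Matrix.star_eq_conjTranspose]
    refine Matrix.PosSemidef.mul_mul_conjTranspose_same ?_ V
    exact Matrix.PosSemidef.diagonal fun i =>
      RCLike.ofReal_nonneg.mpr (abs_nonneg _)
  have hUDsq : (U * D) ^ 2 = D.conjTranspose * D := by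
    rw [pow_two, hUD, hconj, show D.conjTranspose = D from hD]
    conv_rhs => rw [hspec]
    rw [hconj]
    have hsq' : (RCLike.ofReal ∘ fun i => |l i|) * (RCLike.ofReal ∘ fun i => |l i|)
        = (RCLike.ofReal ∘ l) * (RCLike.ofReal ∘ l : Fin n → ℂ) := by
      funext i
      show (RCLike.ofReal |l i| : ℂ) * RCLike.ofReal |l i|
          = RCLike.ofReal (l i) * RCLike.ofReal (l i)
      rw [← RCLike.ofReal_mul, ← RCLike.ofReal_mul, abs_mul_abs_self]
    rw [hsq']
  have htraceNorm : traceNorm D = (U * D).trace.re := by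
    have := hUDpsd.eq_sqrt_of_sq_eq (Matrix.posSemidef_conjTranspose_mul_self D) hUDsq
    rw [traceNorm, ← this]
  -- 1 ± U are PSD
  have hosum : ∀ (σ : ℂ),
      (1 : Matrix (Fin n) (Fin n) ℂ) + σ • U
        = V * Matrix.diagonal (fun i => 1 + σ * s i) * star V := by
    intro σ
    have h1 : Matrix.diagonal (fun i => 1 + σ * s i)
        = (1 : Matrix (Fin n) (Fin n) ℂ) + σ • Matrix.diagonal s := by
      rw [← Matrix.diagonal_one, ← Matrix.diagonal_smul, ← Matrix.diagonal_add]
      congr 1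
    rw [h1, Matrix.mul_add, Matrix.add_mul, mul_one, hV1, Matrix.mul_smul,
      Matrix.smul_mul, hUdef]
  have hpsd_pm : ∀ (σ : ℂ), σ = 1 ∨ σ = -1 →
      ((1 : Matrix (Fin n) (Fin n) ℂ) + σ • U).PosSemidef := by
    intro σ hσ
    rw [hosum σ, Matrix.star_eq_conjTranspose]
    refine Matrix.PosSemidef.mul_mul_conjTranspose_same ?_ V
    apply Matrix.PosSemidef.diagonal
    intro i
    rcases hσ with rfl | rfl <;> by_cases hi : 0 ≤ l i <;>
      simp [hsdef, hi] <;> norm_num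
  have hIpU : ((1 : Matrix (Fin n) (Fin n) ℂ) + U).PosSemidef := by
    simpa using hpsd_pm 1 (Or.inl rfl)
  have hImU : ((1 : Matrix (Fin n) (Fin n) ℂ) - U).PosSemidef := by
    have := hpsd_pm (-1) (Or.inr rfl)
    simpa [sub_eq_add_neg] using this
  -- the square root matrix
  set M : Matrix (Fin n) (Fin n) ℂ := ((hA.pow 2).add (hB.pow 2)).sqrt with hMdef
  have hMpsd : M.PosSemidef := ((hA.pow 2).add (hB.pow 2)).posSemidef_sqrt
  have hM2 : M ^ 2 = A ^ 2 + B ^ 2 := ((hA.pow 2).add (hB.pow 2)).sq_sqrt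
  have hMA : (M - A).PosSemidef := by
    apply psd_sub_of_sq_sub_psd hA hMpsd
    rw [hM2, add_sub_cancel_left]
    exact hB.pow 2
  have hMB : (M - B).PosSemidef := by
    apply psd_sub_of_sq_sub_psd hB hMpsd
    rw [hM2, add_sub_cancel_right]
    exact hA.pow 2
  -- the two nonnegative traces
  have ht1 : 0 ≤ (((1 : Matrix (Fin n) (Fin n) ℂ) + U) * (M - A)).trace :=
    psd_trace_mul_nonneg hIpU hMA
  have ht2 : 0 ≤ (((1 : Matrix (Fin n) (Fin n) ℂ) - U) * (M - B)).trace :=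
    psd_trace_mul_nonneg hImU hMB
  have hident : ((1 : Matrix (Fin n) (Fin n) ℂ) + U) * (M - A)
      + ((1 : Matrix (Fin n) (Fin n) ℂ) - U) * (M - B)
      = M + M - (A + B) - U * D := by
    rw [hDdef]
    noncomm_ring
  have hsum : 0 ≤ (M + M - (A + B) - U * D).trace := by
    rw [← hident, Matrix.trace_add]
    exact add_nonneg ht1 ht2
  have hre : 0 ≤ (M.trace.re + M.trace.re - (A + B).trace.re - (U * D).trace.re) := by
    have := (Complex.le_def).mp hsum
    have h1 := this.1
    simpa [Matrix.trace_sub, Matrix.trace_add, Complex.sub_re, Complex.add_re] using h1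
  rw [htraceNorm]
  linarith
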